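/- For the cubic δ(τ) = (v/(2T²))τ³ − (3v/(2T))τ² + vτ with T > 0 and v ≥ 0, the maximum of |δ(τ)| over τ ∈ [0, T] equals (√3/9)·T·v, attained at τ* = T(1 − √3/3). -/

import Mathlib

theorem stmt_8 (T v : ℝ) (hT : 0 < T) (hv : 0 ≤ v)
    (δ : ℝ → ℝ)
    (hδ : δ = fun τ => v / (2 * T ^ 2) * τ ^ 3 - 3 * v / (2 * T) * τ ^ 2 + v * τ) :
    (∀ τ ∈ Set.Icc (0:ℝ) T, |δ τ| ≤ Real.sqrt 3 / 9 * T * v) ∧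
    T * (1 - Real.sqrt 3 / 3) ∈ Set.Icc (0:ℝ) T ∧
    |δ (T * (1 - Real.sqrt 3 / 3))| = Real.sqrt 3 / 9 * T * v := by
  have hs : Real.sqrt 3 ^ 2 = 3 := Real.sq_sqrt (by norm_num)
  have hs0 : (0:ℝ) ≤ Real.sqrt 3 := Real.sqrt_nonneg 3
  have hs3 : Real.sqrt 3 ≤ 3 := by nlinarith
  have hs1 : 1 ≤ Real.sqrt 3 := by nlinarith
  subst hδ
  set s := Real.sqrt 3 with hsdef
  have hT2 : (0:ℝ) < 2 * T ^ 2 := by positivity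
  refine ⟨?_, ?_, ?_⟩
  · intro τ hτ
    obtain ⟨h0, h1⟩ := hτ
    have hval : v / (2 * T ^ 2) * τ ^ 3 - 3 * v / (2 * T) * τ ^ 2 + v * τ
        = v * (τ * (T - τ) * (2 * T - τ)) / (2 * T ^ 2) := by
      field_simp; ring
    simp only [hval]
    have hnn : 0 ≤ v * (τ * (T - τ) * (2 * T - τ)) / (2 * T ^ 2) := by
      apply div_nonneg _ hT2.le
      apply mul_nonneg hv
      apply mul_nonneg (mul_nonneg h0 (by linarith)) (by linarith)
    rw [abs_of_nonneg hnn, div_le_iff₀ hT2]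
    have key : s / 9 * T * v * (2 * T ^ 2) - v * (τ * (T - τ) * (2 * T - τ))
        = v * (τ - T * (1 - s / 3)) ^ 2 * (T * (1 + 2 * s / 3) - τ) := by
      linear_combination (v * (T ^ 3 / 3 - T ^ 2 * τ / 3 - 2 * s * T ^ 3 / 27)) * hs
    have hr : 0 ≤ T * (1 + 2 * s / 3) - τ := by nlinarith
    nlinarith [mul_nonneg (mul_nonneg hv (sq_nonneg (τ - T * (1 - s / 3)))) hr]
  · constructor
    · nlinarith
    · nlinarith
  · have heq : v / (2 * T ^ 2) * (T * (1 - s / 3)) ^ 3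
        - 3 * v / (2 * T) * (T * (1 - s / 3)) ^ 2 + v * (T * (1 - s / 3))
        = s / 9 * T * v := by
      have hT0 : T ≠ 0 := ne_of_gt hT
      field_simp
      ring_nf
      linear_combination (-9 * v * s) * hs
    simp only [heq]
    exact abs_of_nonneg (by positivity)
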